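/- Let X_1,…,X_n be i.i.d. real random variables with a density f_X that is twice continuously differentiable in a neighbourhood of 0, and let K:ℝ→[0,∞) be a continuous, symmetric kernel supported in [−1,1] with ∫K = 1. Let h = h_n → 0 with nh → ∞, and set V_i = (1, 1{X_i≥0}, X_i/h, 1{X_i≥0}X_i/h)^⊤ and K_h(x) = K(x/h)/h. Then: (i) E(K_h(X_1)V_1V_1^⊤) = f_X(0)κ(K) + h·f_X'(0)·M₁ + (h²/2)·f_X''(0)·M₂ + o(h²) entrywise as h → 0, where M₁ has rows (K^{(1)},K_+^{(1)},K^{(2)},K_+^{(2)}), (K_+^{(1)},K_+^{(1)},K_+^{(2)},K_+^{(2)}), (K^{(2)},K_+^{(2)},K^{(3)},K_+^{(3)}), (K_+^{(2)},K_+^{(2)},K_+^{(3)},K_+^{(3)}) and M₂ has rows (K^{(2)},K_+^{(2)},K^{(3)},K_+^{(3)}), (K_+^{(2)},K_+^{(2)},K_+^{(3)},K_+^{(3)}), (K^{(3)},K_+^{(3)},K^{(4)},K_+^{(4)}), (K_+^{(3)},K_+^{(3)},K_+^{(4)},K_+^{(4)}); and (ii) each entry of (1/n)Σ_{i=1}^n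 K_h(X_i)V_iV_i^⊤ − E(K_h(X_1)V_1V_1^⊤) has variance O(1/(nh)); in particular (1/n)Σ_iK_h(X_i)V_iV_i^⊤ converges entrywise in probability to f_X(0)κ(K). -/

import Mathlib

open MeasureTheory ProbabilityTheory Filter Asymptotics
open scoped NNReal ENNReal

noncomputable section

/-- Indicator `1{x ≥ 0}`. -/
def indPos (x : ℝ) : ℝ := if 0 ≤ x then 1 else 0

/-- The RD design vector `V = (1, 1{x≥0}, x/h, 1{x≥0}·x/h)`. -/
def Vvec (h x : ℝ) : Fin 4 → ℝ := ![1, indPos x, x / h, indPos x * (x / h)]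

/-- Kernel weight `K_h(x) = K(x/h)/h`. -/
def Kh (K : ℝ → ℝ) (h x : ℝ) : ℝ := K (x / h) / h

/-- `a`-th moment of the kernel. -/
def kmom (K : ℝ → ℝ) (a : ℕ) : ℝ := ∫ u, u ^ a * K u

/-- One-sided moment `K_+^{(a)}`. -/
def kmomP (K : ℝ → ℝ) (a : ℕ) : ℝ := ∫ u in Set.Ioi (0 : ℝ), u ^ a * K u

/-- The 4×4 kernel matrix κ(K). -/
def kappa (K : ℝ → ℝ) : Matrix (Fin 4) (Fin 4) ℝ :=
  !![kmom K 0, kmomP K 0, kmom K 1, kmomP K 1;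
     kmomP K 0, kmomP K 0, kmomP K 1, kmomP K 1;
     kmom K 1, kmomP K 1, kmom K 2, kmomP K 2;
     kmomP K 1, kmomP K 1, kmomP K 2, kmomP K 2]

/-- The first-order matrix M₁ in the expansion. -/
def kmatM1 (K : ℝ → ℝ) : Matrix (Fin 4) (Fin 4) ℝ :=
  !![kmom K 1, kmomP K 1, kmom K 2, kmomP K 2;
     kmomP K 1, kmomP K 1, kmomP K 2, kmomP K 2;
     kmom K 2, kmomP K 2, kmom K 3, kmomP K 3;
     kmomP K 2, kmomP K 2, kmomP K 3, kmomP K 3]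

/-- The second-order matrix M₂ in the expansion. -/
def kmatM2 (K : ℝ → ℝ) : Matrix (Fin 4) (Fin 4) ℝ :=
  !![kmom K 2, kmomP K 2, kmom K 3, kmomP K 3;
     kmomP K 2, kmomP K 2, kmomP K 3, kmomP K 3;
     kmom K 3, kmomP K 3, kmom K 4, kmomP K 4;
     kmomP K 3, kmomP K 3, kmomP K 4, kmomP K 4]

lemma taylor_rem {f : ℝ → ℝ} {ε : ℝ} (hε : 0 < ε)
    (hf : ContDiffOn ℝ 2 f (Metric.ball (0 : ℝ) ε)) :
    (fun x => f x - f 0 - deriv f 0 * x - deriv (deriv f) 0 * x ^ 2 / 2)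
      =o[nhds (0:ℝ)] fun x => x ^ 2 := by
  have hopen : IsOpen (Metric.ball (0:ℝ) ε) := Metric.isOpen_ball
  have h0mem : (0:ℝ) ∈ Metric.ball (0:ℝ) ε := by simpa using hε
  have hf1 : ContDiffOn ℝ 1 (deriv f) (Metric.ball (0:ℝ) ε) :=
    hf.deriv_of_isOpen hopen (by norm_num)
  have hfd : DifferentiableOn ℝ f (Metric.ball (0:ℝ) ε) :=
    hf.differentiableOn (by norm_num)
  have hfd1 : DifferentiableOn ℝ (deriv f) (Metric.ball (0:ℝ) ε) :=
    hf1.differentiableOn (by norm_num)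
  have hdd : ∀ y ∈ Metric.ball (0:ℝ) ε, HasDerivAt (deriv f) (deriv (deriv f) y) y :=
    fun y hy => (hfd1.differentiableAt (hopen.mem_nhds hy)).hasDerivAt
  have hd : ∀ y ∈ Metric.ball (0:ℝ) ε, HasDerivAt f (deriv f y) y :=
    fun y hy => (hfd.differentiableAt (hopen.mem_nhds hy)).hasDerivAt
  set r : ℝ → ℝ := fun x => f x - f 0 - deriv f 0 * x - deriv (deriv f) 0 * x ^ 2 / 2 with hr
  set φ : ℝ → ℝ := fun x => deriv f x - deriv f 0 - deriv (deriv f) 0 * x with hφ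
  have hrd : ∀ y ∈ Metric.ball (0:ℝ) ε, HasDerivAt r (φ y) y := by
    intro y hy
    have h1 : HasDerivAt (fun x : ℝ => deriv f 0 * x) (deriv f 0) y := by
      simpa using (hasDerivAt_id y).const_mul (deriv f 0)
    have h2 : HasDerivAt (fun x : ℝ => deriv (deriv f) 0 * x ^ 2 / 2)
        (deriv (deriv f) 0 * y) y := by
      have := ((hasDerivAt_pow 2 y).const_mul (deriv (deriv f) 0)).div_const 2
      simpa using this.congr_deriv (by ring)
    have := (((hd y hy).sub_const (f 0)).sub h1).sub h2
    exact this.congr_deriv (by simp only [hφ])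
  have hφo : φ =o[nhds (0:ℝ)] fun x => x := by
    have h0 : HasDerivAt (deriv f) (deriv (deriv f) 0) 0 := hdd 0 h0mem
    have := hasDerivAt_iff_isLittleO.1 h0
    simpa [hφ, mul_comm] using this
  rw [isLittleO_iff]
  intro c hc
  have h1 := isLittleO_iff.1 hφo hc
  have h2 : ∀ᶠ x : ℝ in nhds 0, x ∈ Metric.ball (0:ℝ) ε :=
    hopen.eventually_mem h0mem
  rw [Metric.eventually_nhds_iff] at h1 h2 ⊢
  obtain ⟨δ1, hδ1, H1⟩ := h1
  obtain ⟨δ2, hδ2, H2⟩ := h2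
  refine ⟨min δ1 δ2, lt_min hδ1 hδ2, fun {x} hx => ?_⟩
  have hxd1 : dist x 0 < δ1 := lt_of_lt_of_le hx (min_le_left _ _)
  have hxd2 : dist x 0 < δ2 := lt_of_lt_of_le hx (min_le_right _ _)
  -- segment from 0 to x
  have hseg : ∀ t ∈ segment ℝ (0:ℝ) x, |t| ≤ |x| := by
    intro t ht
    obtain ⟨a, b, ha, hb, hab, habt⟩ := ht
    have : t = b * x := by rw [← habt]; simp
    rw [this, abs_mul]
    have hb1 : b ≤ 1 := by linarith
    calc |b| * |x| = b * |x| := by rw [abs_of_nonneg hb]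
    _ ≤ 1 * |x| := by exact mul_le_mul_of_nonneg_right hb1 (abs_nonneg x)
    _ = |x| := one_mul _
  have hsub : segment ℝ (0:ℝ) x ⊆ Metric.ball (0:ℝ) ε := by
    intro t ht
    have := hseg t ht
    have hx2 : |x| < δ2 := by simpa [Real.dist_eq] using hxd2
    have : |t| < δ2 := lt_of_le_of_lt this hx2
    exact H2 (by simpa [Real.dist_eq] using this)
  have key : ‖r x - r 0‖ ≤ c * |x| * ‖x - 0‖ := by
    refine (convex_segment _ _).norm_image_sub_le_of_norm_hasDerivWithin_le
      (f' := φ) (fun t ht => ((hrd t (hsub ht)).hasDerivWithinAt)) ?_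
      (left_mem_segment _ _ _) (right_mem_segment _ _ _)
    intro t ht
    have h1x : |t| < δ1 := lt_of_le_of_lt (hseg t ht)
      (by simpa [Real.dist_eq] using hxd1)
    have := H1 (y := t) (by simpa [Real.dist_eq] using h1x)
    calc ‖φ t‖ ≤ c * ‖t‖ := this
    _ ≤ c * |x| := by
      exact mul_le_mul_of_nonneg_left (by simpa [Real.norm_eq_abs] using hseg t ht) hc.le
  have hr0 : r 0 = 0 := by simp [hr]
  rw [hr0, sub_zero, sub_zero] at key
  calc ‖r x‖ ≤ c * |x| * ‖x‖ := key
  _ = c * ‖x ^ 2‖ := by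
    rw [Real.norm_eq_abs, Real.norm_eq_abs, abs_pow]; ring

/-- combined moment integrand -/
def qf (K : ℝ → ℝ) (s p : ℕ) : ℝ → ℝ := fun u => indPos u ^ s * u ^ p * K u
/-- combined moment -/
def mmom (K : ℝ → ℝ) (s p : ℕ) : ℝ := ∫ u, qf K s p u

lemma measurable_indPos : Measurable indPos := by
  unfold indPos
  exact Measurable.ite measurableSet_Ici measurable_const measurable_const

lemma indPos_nonneg (x : ℝ) : 0 ≤ indPos x := by unfold indPos; split <;> norm_num

lemma indPos_le_one (x : ℝ) : indPos x ≤ 1 := by unfold indPos; split <;> norm_num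

lemma abs_indPos_pow_le (x : ℝ) (s : ℕ) : |indPos x ^ s| ≤ 1 := by
  rw [abs_pow]
  rw [abs_of_nonneg (indPos_nonneg x)]
  exact pow_le_one₀ (indPos_nonneg x) (indPos_le_one x)

lemma indPos_div (h : ℝ) (hh : 0 < h) (x : ℝ) : indPos (x / h) = indPos x := by
  unfold indPos
  have : 0 ≤ x / h ↔ 0 ≤ x := by
    constructor
    · intro hx; by_contra hc; push_neg at hc
      have := div_neg_of_neg_of_pos hc hh; linarith
    · intro hx; exact div_nonneg hx hh.le
  simp [this]

lemma measurable_qf {K : ℝ → ℝ} (hK : Continuous K) (s p : ℕ) : Measurable (qf K s p) := by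
  unfold qf
  exact ((measurable_indPos.pow_const s).mul (measurable_id.pow_const p)).mul hK.measurable

lemma integrable_of_bdd_supp {g : ℝ → ℝ} (hg : AEStronglyMeasurable g volume) (C : ℝ)
    (hb : ∀ u, |g u| ≤ C) (h0 : ∀ u ∉ Set.Icc (-1:ℝ) 1, g u = 0) : Integrable g := by
  have hsupp : Function.support g ⊆ Set.Icc (-1:ℝ) 1 := by
    intro u hu
    by_contra hc
    exact hu (h0 u hc)
  rw [← integrableOn_iff_integrable_of_support_subset hsupp]
  exact Measure.integrableOn_of_bounded (measure_Icc_lt_top).ne hg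
    (ae_of_all _ fun u => hb u)

/-- bound for the kernel -/
lemma kernel_bound {K : ℝ → ℝ} (hKcont : Continuous K)
    (hKnonneg : ∀ u, 0 ≤ K u) (hKsupp : ∀ u : ℝ, u ∉ Set.Icc (-1 : ℝ) 1 → K u = 0) :
    ∃ C : ℝ, 0 ≤ C ∧ ∀ u, K u ≤ C := by
  obtain ⟨C, hC⟩ := (isCompact_Icc (a := (-1:ℝ)) (b := 1)).exists_bound_of_continuousOn
    hKcont.continuousOn
  refine ⟨max C 0, le_max_right _ _, fun u => ?_⟩
  by_cases hu : u ∈ Set.Icc (-1:ℝ) 1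
  · have := hC u hu
    rw [Real.norm_eq_abs, abs_of_nonneg (hKnonneg u)] at this
    exact le_trans this (le_max_left _ _)
  · rw [hKsupp u hu]; exact le_max_right _ _

lemma qf_bound {K : ℝ → ℝ} {C : ℝ} (hKnonneg : ∀ u, 0 ≤ K u)
    (hKsupp : ∀ u : ℝ, u ∉ Set.Icc (-1 : ℝ) 1 → K u = 0) (hC : ∀ u, K u ≤ C)
    (s p : ℕ) (u : ℝ) : |qf K s p u| ≤ C := by
  by_cases hu : u ∈ Set.Icc (-1:ℝ) 1
  · have hKC := hC u
    have h1 : |u ^ p| ≤ 1 := by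
      rw [abs_pow]
      exact pow_le_one₀ (abs_nonneg u) (abs_le.2 ⟨hu.1, hu.2⟩)
    calc |qf K s p u| = |indPos u ^ s| * |u ^ p| * K u := by
          unfold qf; rw [abs_mul, abs_mul, abs_of_nonneg (hKnonneg u)]
    _ ≤ 1 * 1 * C := by
          exact mul_le_mul (mul_le_mul (abs_indPos_pow_le u s) h1 (abs_nonneg _) zero_le_one)
            hKC (hKnonneg u) (by norm_num)
    _ = C := by ring
  · unfold qf; rw [hKsupp u hu]
    simp only [mul_zero, abs_zero]
    exact (hKnonneg u).trans (hC u)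

lemma qf_zero_outside {K : ℝ → ℝ} (hKsupp : ∀ u : ℝ, u ∉ Set.Icc (-1 : ℝ) 1 → K u = 0)
    (s p : ℕ) (u : ℝ) (hu : u ∉ Set.Icc (-1:ℝ) 1) : qf K s p u = 0 := by
  unfold qf; rw [hKsupp u hu, mul_zero]

lemma integrable_qf {K : ℝ → ℝ} (hKcont : Continuous K) (hKnonneg : ∀ u, 0 ≤ K u)
    (hKsupp : ∀ u : ℝ, u ∉ Set.Icc (-1 : ℝ) 1 → K u = 0) (s p : ℕ) :
    Integrable (qf K s p) := by
  obtain ⟨C, hC0, hC⟩ := kernel_bound hKcont hKnonneg hKsupp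
  exact integrable_of_bdd_supp (measurable_qf hKcont s p).aestronglyMeasurable C
    (qf_bound hKnonneg hKsupp hC s p) (qf_zero_outside hKsupp s p)

/-- the moments: s = 0 case -/
lemma mmom_zero {K : ℝ → ℝ} (p : ℕ) : mmom K 0 p = kmom K p := by
  unfold mmom kmom qf; simp

/-- s ≥ 1 case -/
lemma mmom_pos {K : ℝ → ℝ} (s p : ℕ) (hs : 1 ≤ s) : mmom K s p = kmomP K p := by
  unfold mmom kmomP qf
  have : ∀ u : ℝ, indPos u ^ s * u ^ p * K u
      = Set.indicator (Set.Ici (0:ℝ)) (fun u => u ^ p * K u) u := by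
    intro u
    unfold indPos
    by_cases hu : 0 ≤ u
    · simp [hu, Set.indicator_of_mem (Set.mem_Ici.2 hu)]
    · simp [hu, Set.indicator_of_notMem (fun hc => hu (Set.mem_Ici.1 hc)),
        zero_pow (by omega : s ≠ 0)]
  rw [show (fun u => indPos u ^ s * u ^ p * K u) = fun u =>
    Set.indicator (Set.Ici (0:ℝ)) (fun u => u ^ p * K u) u from funext this]
  rw [integral_indicator measurableSet_Ici]
  exact integral_Ici_eq_integral_Ioi

/-- change of measure -/
lemma integral_comp_density {Ω : Type*} [MeasurableSpace Ω] (P : Measure Ω)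
    [IsProbabilityMeasure P] (X0 : Ω → ℝ) (hX : Measurable X0) (f : ℝ → ℝ)
    (hfmeas : Measurable f) (hfnonneg : ∀ x, 0 ≤ f x)
    (hdens : Measure.map X0 P = volume.withDensity fun x => ENNReal.ofReal (f x))
    (g : ℝ → ℝ) (hg : Measurable g) :
    ∫ ω, g (X0 ω) ∂P = ∫ x, f x * g x := by
  rw [← integral_map hX.aemeasurable hg.aestronglyMeasurable, hdens]
  rw [show (fun x => ENNReal.ofReal (f x))
      = (fun x => ((Real.toNNReal (f x) : ℝ≥0) : ℝ≥0∞)) from rfl]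
  rw [integral_withDensity_eq_integral_smul hfmeas.real_toNNReal g]
  congr 1; funext x
  simp [NNReal.smul_def, Real.coe_toNNReal _ (hfnonneg x)]

/-- scaling -/
lemma integral_scale {K : ℝ → ℝ} (f : ℝ → ℝ) {h : ℝ} (hh : 0 < h) (s p : ℕ) :
    ∫ x, f x * (indPos x ^ s * (x / h) ^ p * Kh K h x)
      = ∫ u, qf K s p u * f (h * u) := by
  have key := MeasureTheory.Measure.integral_comp_div (g := fun u => qf K s p u * f (h * u) / h) h
  have heq : ∀ x : ℝ, f x * (indPos x ^ s * (x / h) ^ p * Kh K h x)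
      = qf K s p (x / h) * f (h * (x / h)) / h := by
    intro x
    unfold qf Kh
    rw [indPos_div h hh, mul_div_cancel₀ _ hh.ne']
    ring
  rw [show (fun x => f x * (indPos x ^ s * (x / h) ^ p * Kh K h x))
      = fun x => (fun u => qf K s p u * f (h * u) / h) (x / h) from funext heq]
  rw [key, abs_of_pos hh]
  rw [integral_div]
  rw [smul_eq_mul]
  field_simp

lemma qf_le_K {K : ℝ → ℝ} (hKnonneg : ∀ u, 0 ≤ K u) (s p : ℕ) {u : ℝ}
    (hu : u ∈ Set.Icc (-1:ℝ) 1) : |qf K s p u| ≤ K u := by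
  have h1 : |u ^ p| ≤ 1 := by
    rw [abs_pow]; exact pow_le_one₀ (abs_nonneg u) (abs_le.2 ⟨hu.1, hu.2⟩)
  calc |qf K s p u| = |indPos u ^ s| * |u ^ p| * K u := by
        unfold qf; rw [abs_mul, abs_mul, abs_of_nonneg (hKnonneg u)]
  _ ≤ 1 * 1 * K u := by
        exact mul_le_mul_of_nonneg_right
          (mul_le_mul (abs_indPos_pow_le u s) h1 (abs_nonneg _) zero_le_one) (hKnonneg u)
  _ = K u := by ring

lemma measurable_g {K : ℝ → ℝ} (hK : Continuous K) (s p : ℕ) {h : ℝ} :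
    Measurable (fun x => indPos x ^ s * (x / h) ^ p * Kh K h x) := by
  unfold Kh
  exact ((measurable_indPos.pow_const s).mul ((measurable_id.div_const h).pow_const p)).mul
    ((hK.measurable.comp (measurable_id.div_const h)).div_const h)

theorem core_expansion {Ω : Type*} [MeasurableSpace Ω] (P : Measure Ω)
    [IsProbabilityMeasure P] (X0 : Ω → ℝ) (hX : Measurable X0)
    (f : ℝ → ℝ) (hfmeas : Measurable f) (hfnonneg : ∀ x, 0 ≤ f x)
    (hdens : Measure.map X0 P = volume.withDensity fun x => ENNReal.ofReal (f x))
    (ε : ℝ) (hε : 0 < ε) (hf : ContDiffOn ℝ 2 f (Metric.ball (0 : ℝ) ε))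
    (K : ℝ → ℝ) (hKcont : Continuous K) (hKnonneg : ∀ u, 0 ≤ K u)
    (hKsupp : ∀ u : ℝ, u ∉ Set.Icc (-1 : ℝ) 1 → K u = 0)
    (hKone : (∫ u, K u) = 1)
    (h : ℕ → ℝ) (hhpos : ∀ n, 0 < h n) (hh0 : Tendsto h atTop (nhds 0))
    (s p : ℕ) :
    (fun n => (∫ ω, indPos (X0 ω) ^ s * (X0 ω / h n) ^ p * Kh K (h n) (X0 ω) ∂P)
      - (f 0 * mmom K s p + h n * deriv f 0 * mmom K s (p + 1)
        + (h n) ^ 2 / 2 * deriv (deriv f) 0 * mmom K s (p + 2))) =o[atTop]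
      fun n => (h n) ^ 2 := by
  obtain ⟨CK, hCK0, hCK⟩ := kernel_bound hKcont hKnonneg hKsupp
  -- bound for f near 0
  obtain ⟨Mf', hMf'⟩ := (isCompact_Icc (a := -(ε/2)) (b := ε/2)).exists_bound_of_continuousOn
    (hf.continuousOn.mono (fun x hx => by
      simp only [Metric.mem_ball, Real.dist_eq, sub_zero]
      rcases Set.mem_Icc.1 hx with ⟨h1, h2⟩
      rw [abs_lt]; constructor <;> linarith))
  set Mf := max Mf' 0 with hMf
  have hMfb : ∀ x ∈ Set.Icc (-(ε/2)) (ε/2), |f x| ≤ Mf := by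
    intro x hx
    exact le_trans (by simpa [Real.norm_eq_abs] using hMf' x hx) (le_max_left _ _)
  -- kernel integrable
  have hKint : Integrable K := integrable_of_bdd_supp hKcont.measurable.aestronglyMeasurable CK
    (fun u => by by_cases hu : u ∈ Set.Icc (-1:ℝ) 1
                 · rw [abs_of_nonneg (hKnonneg u)]; exact hCK u
                 · rw [hKsupp u hu]; simpa using hCK0) hKsupp
  have hqint : ∀ s' p', Integrable (qf K s' p') := fun s' p' =>
    integrable_of_bdd_supp (measurable_qf hKcont s' p').aestronglyMeasurable CK
      (qf_bound hKnonneg hKsupp hCK s' p') (qf_zero_outside hKsupp s' p')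
  -- identity for the Ω-integral
  have hEid : ∀ n, (∫ ω, indPos (X0 ω) ^ s * (X0 ω / h n) ^ p * Kh K (h n) (X0 ω) ∂P)
      = ∫ u, qf K s p u * f (h n * u) := by
    intro n
    rw [integral_comp_density P X0 hX f hfmeas hfnonneg hdens _ (measurable_g hKcont s p)]
    exact integral_scale f (hhpos n) s p
  set r : ℝ → ℝ := fun x => f x - f 0 - deriv f 0 * x - deriv (deriv f) 0 * x ^ 2 / 2 with hrdef
  have hro := taylor_rem hε hf
  rw [isLittleO_iff]
  intro c hc
  have h1 := isLittleO_iff.1 hro hc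
  rw [Metric.eventually_nhds_iff] at h1
  obtain ⟨δ, hδ, Hr⟩ := h1
  have ev1 : ∀ᶠ n in atTop, |h n| < δ := by
    have := Metric.tendsto_nhds.mp hh0 δ hδ
    simpa [Real.dist_eq] using this
  have ev2 : ∀ᶠ n in atTop, |h n| < ε/2 := by
    have := Metric.tendsto_nhds.mp hh0 (ε/2) (by linarith)
    simpa [Real.dist_eq] using this
  filter_upwards [ev1, ev2] with n hn1 hn2
  have hpos := hhpos n
  -- integrability of the main integrand
  have hfhmeas : Measurable fun u : ℝ => f (h n * u) :=
    hfmeas.comp (measurable_const.mul measurable_id)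
  have i1 : Integrable (fun u => qf K s p u * f (h n * u)) := by
    refine integrable_of_bdd_supp ((measurable_qf hKcont s p).mul hfhmeas).aestronglyMeasurable
      (CK * Mf) (fun u => ?_) (fun u hu => by rw [qf_zero_outside hKsupp s p u hu, zero_mul])
    by_cases hu : u ∈ Set.Icc (-1:ℝ) 1
    · rw [abs_mul]
      refine mul_le_mul (qf_bound hKnonneg hKsupp hCK s p u) ?_ (abs_nonneg _) hCK0
      refine hMfb _ ?_
      rcases Set.mem_Icc.1 hu with ⟨hl, hr2⟩
      have : |h n * u| ≤ ε/2 := by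
        rw [abs_mul]
        calc |h n| * |u| ≤ (ε/2) * 1 := by
              exact mul_le_mul hn2.le (abs_le.2 ⟨hl, hr2⟩) (abs_nonneg u) (by linarith)
        _ = ε/2 := by ring
      rcases abs_le.1 this with ⟨hA, hB⟩
      exact Set.mem_Icc.2 ⟨hA, hB⟩
    · rw [qf_zero_outside hKsupp s p u hu, zero_mul, abs_zero]
      exact mul_nonneg hCK0 (le_max_right _ _)
  -- pointwise split
  have split : ∀ u, qf K s p u * f (h n * u)
      = (f 0 * qf K s p u + (h n * deriv f 0) * qf K s (p + 1) u
          + ((h n) ^ 2 / 2 * deriv (deriv f) 0) * qf K s (p + 2) u)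
        + qf K s p u * r (h n * u) := by
    intro u
    simp only [hrdef]
    unfold qf
    rw [pow_succ, pow_succ, pow_succ]
    ring
  have ipoly : Integrable (fun u => f 0 * qf K s p u + (h n * deriv f 0) * qf K s (p + 1) u
      + ((h n) ^ 2 / 2 * deriv (deriv f) 0) * qf K s (p + 2) u) :=
    (((hqint s p).const_mul _).add ((hqint s (p+1)).const_mul _)).add
      ((hqint s (p+2)).const_mul _)
  have iA : Integrable (fun u => f 0 * qf K s p u) := (hqint s p).const_mul _
  have iB : Integrable (fun u => (h n * deriv f 0) * qf K s (p + 1) u) :=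
    (hqint s (p+1)).const_mul _
  have iC : Integrable (fun u => ((h n) ^ 2 / 2 * deriv (deriv f) 0) * qf K s (p + 2) u) :=
    (hqint s (p+2)).const_mul _
  have iAB : Integrable (fun u => f 0 * qf K s p u
      + (h n * deriv f 0) * qf K s (p + 1) u) := by exact iA.add iB
  have irem : Integrable (fun u => qf K s p u * r (h n * u)) := by
    have h2 := i1.sub ipoly
    refine h2.congr (ae_of_all _ fun u => ?_)
    simp only [Pi.sub_apply]
    rw [split u]; ring
  have hIsplit : (∫ u, qf K s p u * f (h n * u))
      = (f 0 * mmom K s p + h n * deriv f 0 * mmom K s (p + 1)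
          + (h n) ^ 2 / 2 * deriv (deriv f) 0 * mmom K s (p + 2))
        + ∫ u, qf K s p u * r (h n * u) := by
    rw [show (fun u => qf K s p u * f (h n * u))
        = fun u => (f 0 * qf K s p u + (h n * deriv f 0) * qf K s (p + 1) u
          + ((h n) ^ 2 / 2 * deriv (deriv f) 0) * qf K s (p + 2) u)
          + qf K s p u * r (h n * u) from funext split]
    rw [integral_add ipoly irem]
    congr 1
    rw [integral_add iAB iC, integral_add iA iB]
    rw [integral_const_mul, integral_const_mul, integral_const_mul]
    unfold mmom
    ring
  -- final bound
  have hbound : ‖∫ u, qf K s p u * r (h n * u)‖ ≤ ∫ u, c * (h n) ^ 2 * K u := by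
    refine norm_integral_le_of_norm_le ((hKint.const_mul _)) (ae_of_all _ fun u => ?_)
    by_cases hu : u ∈ Set.Icc (-1:ℝ) 1
    · have hru : ‖r (h n * u)‖ ≤ c * (h n * u) ^ 2 := by
        rw [hrdef]
        have hd : dist (h n * u) 0 < δ := by
          rw [Real.dist_eq, sub_zero, abs_mul]
          calc |h n| * |u| ≤ |h n| * 1 :=
                mul_le_mul_of_nonneg_left (abs_le.2 ⟨hu.1, hu.2⟩) (abs_nonneg _)
          _ = |h n| := mul_one _
          _ < δ := hn1
        have := Hr hd
        simpa only [Real.norm_eq_abs, abs_of_nonneg (sq_nonneg (h n * u))] using this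
      rw [Real.norm_eq_abs, abs_mul]
      calc |qf K s p u| * |r (h n * u)| ≤ K u * (c * (h n * u) ^ 2) := by
            refine mul_le_mul (qf_le_K hKnonneg s p hu) ?_ (abs_nonneg _) (hKnonneg u)
            simpa [Real.norm_eq_abs] using hru
      _ ≤ K u * (c * (h n) ^ 2) := by
            refine mul_le_mul_of_nonneg_left ?_ (hKnonneg u)
            rw [mul_pow]
            refine mul_le_mul_of_nonneg_left ?_ hc.le
            have hu2 : u ^ 2 ≤ 1 := by
              rw [← sq_abs]
              exact pow_le_one₀ (abs_nonneg _) (abs_le.2 ⟨hu.1, hu.2⟩)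
            calc (h n) ^ 2 * u ^ 2 ≤ (h n) ^ 2 * 1 :=
                  mul_le_mul_of_nonneg_left hu2 (sq_nonneg _)
            _ = (h n) ^ 2 := mul_one _
      _ = c * (h n) ^ 2 * K u := by ring
    · rw [qf_zero_outside hKsupp s p u hu, zero_mul, norm_zero]
      exact mul_nonneg (mul_nonneg hc.le (sq_nonneg _)) (hKnonneg u)
  have hKc : (∫ u, c * (h n) ^ 2 * K u) = c * (h n) ^ 2 := by
    rw [integral_const_mul, hKone, mul_one]
  rw [hEid n, hIsplit]
  simp only [add_sub_cancel_left]
  calc ‖∫ u, qf K s p u * r (h n * u)‖ ≤ c * (h n) ^ 2 := by rw [← hKc]; exact hbound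
  _ = c * ‖(h n) ^ 2‖ := by rw [Real.norm_eq_abs, abs_of_nonneg (sq_nonneg _)]

lemma gg_eq {K : ℝ → ℝ} {h : ℝ} (hh : 0 < h) (s p : ℕ) (x : ℝ) :
    indPos x ^ s * (x / h) ^ p * Kh K h x = qf K s p (x / h) / h := by
  unfold qf Kh
  rw [indPos_div h hh]
  ring

lemma integrable_density {Ω : Type*} [MeasurableSpace Ω] (P : Measure Ω)
    [IsProbabilityMeasure P] (X0 : Ω → ℝ) (hX : Measurable X0) (f : ℝ → ℝ)
    (hfmeas : Measurable f) (hfnonneg : ∀ x, 0 ≤ f x)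
    (hdens : Measure.map X0 P = volume.withDensity fun x => ENNReal.ofReal (f x)) :
    Integrable f := by
  have hmap : IsProbabilityMeasure (Measure.map X0 P) :=
    Measure.isProbabilityMeasure_map hX.aemeasurable
  rw [hdens] at hmap
  refine ⟨hfmeas.aestronglyMeasurable, ?_⟩
  unfold HasFiniteIntegral
  have heq : ∫⁻ x, ‖f x‖ₑ ∂volume
      = (volume.withDensity fun x => ENNReal.ofReal (f x)) Set.univ := by
    rw [withDensity_apply _ MeasurableSet.univ, Measure.restrict_univ]
    congr 1; funext x
    rw [← ofReal_norm, Real.norm_of_nonneg (hfnonneg x)]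
  rw [heq, hmap.measure_univ]
  exact ENNReal.one_lt_top

theorem concentration {Ω : Type*} [MeasurableSpace Ω] (P : Measure Ω) [IsProbabilityMeasure P]
    (X : ℕ → Ω → ℝ) (hXmeas : ∀ i, Measurable (X i))
    (hindep : iIndepFun X P)
    (hident : ∀ i, Measure.map (X i) P = Measure.map (X 0) P)
    (f : ℝ → ℝ) (hfmeas : Measurable f) (hfnonneg : ∀ x, 0 ≤ f x)
    (hdens : Measure.map (X 0) P = volume.withDensity fun x => ENNReal.ofReal (f x))
    (ε : ℝ) (hε : 0 < ε) (hf : ContDiffOn ℝ 2 f (Metric.ball (0 : ℝ) ε))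
    (K : ℝ → ℝ) (hKcont : Continuous K) (hKnonneg : ∀ u, 0 ≤ K u)
    (hKsupp : ∀ u : ℝ, u ∉ Set.Icc (-1 : ℝ) 1 → K u = 0)
    (h : ℕ → ℝ) (hhpos : ∀ n, 0 < h n)
    (hh0 : Tendsto h atTop (nhds 0))
    (hnh : Tendsto (fun n : ℕ => (n : ℝ) * h n) atTop atTop)
    (s p : ℕ) (L : ℝ)
    (hmean : Tendsto (fun n => (∫ ω, indPos (X 0 ω) ^ s * (X 0 ω / h n) ^ p
        * Kh K (h n) (X 0 ω) ∂P)) atTop (nhds L)) :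
    ((fun n : ℕ => variance (fun ω => (1 / (n:ℝ)) * ∑ i ∈ Finset.range n,
        indPos (X i ω) ^ s * (X i ω / h n) ^ p * Kh K (h n) (X i ω)) P)
      =O[atTop] fun n : ℕ => 1 / ((n:ℝ) * h n)) ∧
    (∀ δ > (0:ℝ), Tendsto (fun n : ℕ => (P {ω | δ < |(1 / (n:ℝ)) * (∑ i ∈ Finset.range n,
        indPos (X i ω) ^ s * (X i ω / h n) ^ p * Kh K (h n) (X i ω)) - L|}).toReal)
      atTop (nhds 0)) := by
  obtain ⟨CK, hCK0, hCK⟩ := kernel_bound hKcont hKnonneg hKsupp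
  obtain ⟨Mf', hMf'⟩ := (isCompact_Icc (a := -(ε/2)) (b := ε/2)).exists_bound_of_continuousOn
    (hf.continuousOn.mono (fun x hx => by
      simp only [Metric.mem_ball, Real.dist_eq, sub_zero]
      rcases Set.mem_Icc.1 hx with ⟨h1, h2⟩
      rw [abs_lt]; constructor <;> linarith))
  set Mf := max Mf' 0 with hMfdef
  have hMf0 : 0 ≤ Mf := le_max_right _ _
  have hMfb : ∀ x ∈ Set.Icc (-(ε/2)) (ε/2), f x ≤ Mf := fun x hx =>
    le_trans (le_trans (le_abs_self _) (by simpa [Real.norm_eq_abs] using hMf' x hx))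
      (le_max_left _ _)
  have hfint : Integrable f := integrable_density P (X 0) (hXmeas 0) f hfmeas hfnonneg hdens
  set B := 2 * Mf * CK ^ 2 with hBdef
  have hB0 : 0 ≤ B := by positivity
  -- the per-n machinery
  set gg : ℕ → ℝ → ℝ := fun n x => indPos x ^ s * (x / h n) ^ p * Kh K (h n) x with hggdef
  have hggmeas : ∀ n, Measurable (gg n) := fun n => measurable_g hKcont s p
  have hggbd : ∀ n x, |gg n x| ≤ CK / h n := by
    intro n x
    rw [hggdef]
    simp only
    rw [gg_eq (hhpos n) s p x, abs_div, abs_of_pos (hhpos n)]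
    exact (div_le_div_iff_of_pos_right (hhpos n)).2 (qf_bound hKnonneg hKsupp hCK s p _)
  have hggzero : ∀ n x, x ∉ Set.Icc (-(h n)) (h n) → gg n x = 0 := by
    intro n x hx
    rw [hggdef]; simp only
    rw [gg_eq (hhpos n) s p x, qf_zero_outside hKsupp s p _ ?_, zero_div]
    intro hc
    rcases Set.mem_Icc.1 hc with ⟨h1, h2⟩
    refine hx (Set.mem_Icc.2 ⟨?_, ?_⟩)
    · have := mul_le_mul_of_nonneg_left h1 (hhpos n).le
      rw [mul_div_cancel₀ _ (hhpos n).ne'] at this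
      linarith [this]
    · have := mul_le_mul_of_nonneg_left h2 (hhpos n).le
      rw [mul_div_cancel₀ _ (hhpos n).ne'] at this
      linarith [this]
  set Y : ℕ → ℕ → Ω → ℝ := fun n i => gg n ∘ X i with hYdef
  have hYmeas : ∀ n i, Measurable (Y n i) := fun n i => (hggmeas n).comp (hXmeas i)
  have hYL2 : ∀ n i, MemLp (Y n i) 2 P := fun n i =>
    MemLp.of_bound (hYmeas n i).aestronglyMeasurable (CK / h n)
      (ae_of_all _ fun ω => by rw [Real.norm_eq_abs]; exact hggbd n _)
  -- second moment bound
  have hE2eq : ∀ n i, (∫ ω, (Y n i ω) ^ 2 ∂P) = ∫ ω, (Y n 0 ω) ^ 2 ∂P := by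
    intro n i
    have hsq : Measurable fun x => (gg n x) ^ 2 := (hggmeas n).pow_const 2
    have e1 : (∫ ω, (Y n i ω) ^ 2 ∂P)
        = ∫ x, (gg n x) ^ 2 ∂(Measure.map (X i) P) :=
      (integral_map (hXmeas i).aemeasurable hsq.aestronglyMeasurable).symm
    have e2 : (∫ ω, (Y n 0 ω) ^ 2 ∂P)
        = ∫ x, (gg n x) ^ 2 ∂(Measure.map (X 0) P) :=
      (integral_map (hXmeas 0).aemeasurable hsq.aestronglyMeasurable).symm
    rw [e1, e2, hident i]
  have hE1eq : ∀ n i, (∫ ω, Y n i ω ∂P) = ∫ ω, Y n 0 ω ∂P := by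
    intro n i
    have e1 : (∫ ω, Y n i ω ∂P) = ∫ x, gg n x ∂(Measure.map (X i) P) :=
      (integral_map (hXmeas i).aemeasurable (hggmeas n).aestronglyMeasurable).symm
    have e2 : (∫ ω, Y n 0 ω ∂P) = ∫ x, gg n x ∂(Measure.map (X 0) P) :=
      (integral_map (hXmeas 0).aemeasurable (hggmeas n).aestronglyMeasurable).symm
    rw [e1, e2, hident i]
  have hE2bd : ∀ n, |h n| < ε / 2 → (∫ ω, (Y n 0 ω) ^ 2 ∂P) ≤ B / h n := by
    intro n hn2
    have hsq : Measurable fun x => (gg n x) ^ 2 := (hggmeas n).pow_const 2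
    have e0 : (∫ ω, (Y n 0 ω) ^ 2 ∂P) = ∫ x, f x * (gg n x) ^ 2 :=
      integral_comp_density P (X 0) (hXmeas 0) f hfmeas hfnonneg hdens _ hsq
    rw [e0]
    have hle : ∀ x, f x * (gg n x) ^ 2
        ≤ Set.indicator (Set.Icc (-(h n)) (h n)) (fun _ => Mf * (CK / h n) ^ 2) x := by
      intro x
      by_cases hx : x ∈ Set.Icc (-(h n)) (h n)
      · rw [Set.indicator_of_mem hx]
        have hfx : f x ≤ Mf := by
          refine hMfb x ?_
          have hhn : h n < ε/2 := lt_of_le_of_lt (le_abs_self _) hn2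
          rcases Set.mem_Icc.1 hx with ⟨h1, h2⟩
          exact Set.mem_Icc.2 ⟨by linarith, by linarith⟩
        have hgg2 : (gg n x) ^ 2 ≤ (CK / h n) ^ 2 := by
          rw [← sq_abs]
          exact pow_le_pow_left₀ (abs_nonneg _) (hggbd n x) 2
        exact mul_le_mul hfx hgg2 (sq_nonneg _) hMf0
      · rw [Set.indicator_of_notMem hx, hggzero n x hx]
        simp
    have hLint : Integrable (fun x => f x * (gg n x) ^ 2) := by
      have := hfint.bdd_mul (c := (CK / h n) ^ 2) (hsq.aestronglyMeasurable)
        (ae_of_all _ fun x => by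
          rw [Real.norm_eq_abs, abs_of_nonneg (sq_nonneg _), ← sq_abs]
          exact pow_le_pow_left₀ (abs_nonneg _) (hggbd n x) 2)
      exact this.congr (ae_of_all _ fun x => by ring)
    have hRint : Integrable (Set.indicator (Set.Icc (-(h n)) (h n))
        (fun _ => Mf * (CK / h n) ^ 2)) := by
      rw [integrable_indicator_iff measurableSet_Icc]
      exact integrableOn_const measure_Icc_lt_top.ne
    calc (∫ x, f x * (gg n x) ^ 2) ≤ ∫ x, Set.indicator (Set.Icc (-(h n)) (h n))
          (fun _ => Mf * (CK / h n) ^ 2) x := integral_mono hLint hRint hle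
    _ = ((volume (Set.Icc (-(h n)) (h n))).toReal) • (Mf * (CK / h n) ^ 2) :=
          integral_indicator_const _ measurableSet_Icc
    _ = (2 * h n) * (Mf * (CK / h n) ^ 2) := by
          rw [Real.volume_Icc, smul_eq_mul]
          congr 1
          rw [ENNReal.toReal_ofReal (by linarith [(hhpos n).le])]
          ring
    _ = B / h n := by
          rw [hBdef]
          field_simp [(hhpos n).ne']
  -- variance bound
  have hvar : ∀ n, 1 ≤ n → |h n| < ε / 2 →
      variance (fun ω => (1 / (n:ℝ)) * ∑ i ∈ Finset.range n, Y n i ω) P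
        ≤ B / ((n:ℝ) * h n) := by
    intro n hn1 hn2
    have hfun : (fun ω => (1 / (n:ℝ)) * ∑ i ∈ Finset.range n, Y n i ω)
        = fun ω => (1 / (n:ℝ)) * (∑ i ∈ Finset.range n, Y n i) ω := by
      funext ω; rw [Finset.sum_apply]
    rw [hfun, variance_const_mul]
    have hsum : variance (∑ i ∈ Finset.range n, Y n i) P
        = ∑ i ∈ Finset.range n, variance (Y n i) P := by
      refine IndepFun.variance_sum (fun i _ => hYL2 n i) ?_
      intro i _ j _ hij
      exact (hindep.indepFun hij).comp (hggmeas n) (hggmeas n)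
    rw [hsum]
    have hvar_le : ∀ i, variance (Y n i) P ≤ B / h n := by
      intro i
      refine le_trans (variance_le_expectation_sq (hYmeas n i).aestronglyMeasurable) ?_
      have : P[(Y n i) ^ 2] = ∫ ω, (Y n i ω) ^ 2 ∂P := by
        congr 1
      rw [this, hE2eq n i]
      exact hE2bd n hn2
    calc (1 / (n:ℝ)) ^ 2 * ∑ i ∈ Finset.range n, variance (Y n i) P
        ≤ (1 / (n:ℝ)) ^ 2 * ∑ i ∈ Finset.range n, (B / h n) := by
          refine mul_le_mul_of_nonneg_left (Finset.sum_le_sum fun i _ => hvar_le i)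
            (sq_nonneg _)
    _ = (1 / (n:ℝ)) ^ 2 * ((n:ℝ) * (B / h n)) := by
          rw [Finset.sum_const, Finset.card_range, nsmul_eq_mul]
    _ = B / ((n:ℝ) * h n) := by
          have hn0 : (n:ℝ) ≠ 0 := by
            exact_mod_cast Nat.one_le_iff_ne_zero.1 hn1
          field_simp [hn0, (hhpos n).ne']
  have ev2 : ∀ᶠ n in atTop, |h n| < ε/2 := by
    have := Metric.tendsto_nhds.mp hh0 (ε/2) (by linarith)
    simpa [Real.dist_eq] using this
  have hII : (fun n : ℕ => variance (fun ω => (1 / (n:ℝ)) * ∑ i ∈ Finset.range n,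
      indPos (X i ω) ^ s * (X i ω / h n) ^ p * Kh K (h n) (X i ω)) P)
      =O[atTop] fun n : ℕ => 1 / ((n:ℝ) * h n) := by
    rw [isBigO_iff]
    refine ⟨B, ?_⟩
    filter_upwards [ev2, eventually_ge_atTop 1] with n hn2 hn1
    have hnn : (0:ℝ) < (n:ℝ) * h n := by
      have : (0:ℝ) < (n:ℝ) := by exact_mod_cast hn1
      exact mul_pos this (hhpos n)
    have hv := hvar n hn1 hn2
    rw [Real.norm_eq_abs, Real.norm_eq_abs, abs_of_nonneg (variance_nonneg _ _),
      abs_of_nonneg (by positivity : (0:ℝ) ≤ 1 / ((n:ℝ) * h n))]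
    calc variance (fun ω => (1 / (n:ℝ)) * ∑ i ∈ Finset.range n,
          indPos (X i ω) ^ s * (X i ω / h n) ^ p * Kh K (h n) (X i ω)) P
        = variance (fun ω => (1 / (n:ℝ)) * ∑ i ∈ Finset.range n, Y n i ω) P := rfl
    _ ≤ B / ((n:ℝ) * h n) := hv
    _ = B * (1 / ((n:ℝ) * h n)) := by ring
  refine ⟨hII, ?_⟩
  -- part (iii)
  intro δ hδ
  have h1nh : Tendsto (fun n : ℕ => 1 / ((n:ℝ) * h n)) atTop (nhds 0) := by
    have := hnh.inv_tendsto_atTop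
    simpa only [one_div, Pi.inv_def] using this
  have hvar0 : Tendsto (fun n : ℕ => variance (fun ω => (1 / (n:ℝ)) * ∑ i ∈ Finset.range n,
      indPos (X i ω) ^ s * (X i ω / h n) ^ p * Kh K (h n) (X i ω)) P) atTop (nhds 0) :=
    hII.trans_tendsto h1nh
  -- expectation of the mean
  have hEZ : ∀ n : ℕ, 1 ≤ n → (∫ ω, (1 / (n:ℝ)) * ∑ i ∈ Finset.range n, Y n i ω ∂P)
      = ∫ ω, Y n 0 ω ∂P := by
    intro n hn1
    rw [integral_const_mul]
    rw [integral_finset_sum _ (fun i _ => (hYL2 n i).integrable one_le_two)]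
    have : ∀ i ∈ Finset.range n, (∫ ω, Y n i ω ∂P) = ∫ ω, Y n 0 ω ∂P :=
      fun i _ => hE1eq n i
    rw [Finset.sum_congr rfl this, Finset.sum_const, Finset.card_range, nsmul_eq_mul]
    have hn0 : (n:ℝ) ≠ 0 := by exact_mod_cast Nat.one_le_iff_ne_zero.1 hn1
    field_simp
  have hmean' : Tendsto (fun n => ∫ ω, Y n 0 ω ∂P) atTop (nhds L) := hmean
  -- eventually the bias is ≤ δ/2
  have hbias : ∀ᶠ n in atTop, |(∫ ω, Y n 0 ω ∂P) - L| ≤ δ / 2 := by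
    have := Metric.tendsto_nhds.mp hmean' (δ/2) (by linarith)
    filter_upwards [this] with n hn
    rw [Real.dist_eq] at hn
    exact hn.le
  -- Chebyshev bound
  have hcheb : ∀ n : ℕ, 1 ≤ n → |(∫ ω, Y n 0 ω ∂P) - L| ≤ δ / 2 →
      (P {ω | δ < |(1 / (n:ℝ)) * (∑ i ∈ Finset.range n, Y n i ω) - L|}).toReal
        ≤ (variance (fun ω => (1 / (n:ℝ)) * ∑ i ∈ Finset.range n, Y n i ω) P) / (δ/2)^2 := by
    intro n hn1 hb
    set Z : Ω → ℝ := fun ω => (1 / (n:ℝ)) * ∑ i ∈ Finset.range n, Y n i ω with hZdef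
    have hZL2 : MemLp Z 2 P := by
      have hs : MemLp (∑ i ∈ Finset.range n, Y n i) 2 P :=
        memLp_finsetSum' _ (fun i _ => hYL2 n i)
      have hfun2 : (fun ω => (1 / (n:ℝ)) * (∑ i ∈ Finset.range n, Y n i) ω) = Z := by
        funext ω; rw [hZdef]; simp [Finset.sum_apply]
      exact hfun2 ▸ (hs.const_mul (1 / (n:ℝ)))
    have hsub : {ω | δ < |Z ω - L|} ⊆ {ω | δ/2 ≤ |Z ω - P[Z]|} := by
      intro ω hω
      simp only [Set.mem_setOf_eq] at hω ⊢
      have hEZn : P[Z] = ∫ ω, Y n 0 ω ∂P := hEZ n hn1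
      have htri : |Z ω - L| ≤ |Z ω - P[Z]| + |P[Z] - L| := abs_sub_le _ _ _
      rw [hEZn] at htri ⊢
      linarith [htri, hb]
    have hch := meas_ge_le_variance_div_sq (μ := P) hZL2 (c := δ/2) (by linarith)
    have hle := le_trans (measure_mono hsub) hch
    have h2 := ENNReal.toReal_mono (by simp) hle
    rw [ENNReal.toReal_ofReal (div_nonneg (variance_nonneg _ _) (by positivity))] at h2
    exact h2
  -- squeeze
  refine squeeze_zero' (g := fun n : ℕ => (variance (fun ω => (1 / (n:ℝ)) * ∑ i ∈ Finset.range n,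
      indPos (X i ω) ^ s * (X i ω / h n) ^ p * Kh K (h n) (X i ω)) P) / (δ/2)^2)
    (Eventually.of_forall fun n => ENNReal.toReal_nonneg) ?_ ?_
  · filter_upwards [eventually_ge_atTop 1, hbias] with n hn1 hb
    exact hcheb n hn1 hb
  · have := hvar0.div_const ((δ/2)^2)
    simpa using this

def sIdx : Fin 4 → ℕ := ![0, 1, 0, 1]
def pIdx : Fin 4 → ℕ := ![0, 0, 1, 1]

lemma mmom_one {K : ℝ → ℝ} (p : ℕ) : mmom K 1 p = kmomP K p := mmom_pos 1 p le_rfl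
lemma mmom_two {K : ℝ → ℝ} (p : ℕ) : mmom K 2 p = kmomP K p := mmom_pos 2 p one_le_two

lemma Vvec_mul (K : ℝ → ℝ) (h x : ℝ) (a b : Fin 4) :
    Kh K h x * Vvec h x a * Vvec h x b
      = indPos x ^ (sIdx a + sIdx b) * (x / h) ^ (pIdx a + pIdx b) * Kh K h x := by
  fin_cases a <;> fin_cases b <;> simp [Vvec, sIdx, pIdx] <;> ring

lemma kappa_eq (K : ℝ → ℝ) (a b : Fin 4) :
    kappa K a b = mmom K (sIdx a + sIdx b) (pIdx a + pIdx b) := by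
  fin_cases a <;> fin_cases b <;>
    simp [kappa, sIdx, pIdx, mmom_zero, mmom_one, mmom_two, Matrix.vecHead, Matrix.vecTail, Function.comp]


lemma kmatM1_eq (K : ℝ → ℝ) (a b : Fin 4) :
    kmatM1 K a b = mmom K (sIdx a + sIdx b) (pIdx a + pIdx b + 1) := by
  fin_cases a <;> fin_cases b <;>
    simp [kmatM1, sIdx, pIdx, mmom_zero, mmom_one, mmom_two, Matrix.vecHead,
      Matrix.vecTail, Function.comp]

lemma kmatM2_eq (K : ℝ → ℝ) (a b : Fin 4) :
    kmatM2 K a b = mmom K (sIdx a + sIdx b) (pIdx a + pIdx b + 2) := by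
  fin_cases a <;> fin_cases b <;>
    simp [kmatM2, sIdx, pIdx, mmom_zero, mmom_one, mmom_two, Matrix.vecHead,
      Matrix.vecTail, Function.comp]

/-- second-order expansion of `E(K_h(X₁)V₁V₁ᵀ)` and entrywise
concentration of its empirical counterpart. -/
theorem kernel_design_matrix_expansion
    {Ω : Type*} [MeasurableSpace Ω] (P : Measure Ω) [IsProbabilityMeasure P]
    (X : ℕ → Ω → ℝ) (hXmeas : ∀ i, Measurable (X i))
    (hindep : iIndepFun X P)
    (hident : ∀ i, Measure.map (X i) P = Measure.map (X 0) P)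
    -- density of X, twice continuously differentiable near 0
    (f : ℝ → ℝ) (hfmeas : Measurable f) (hfnonneg : ∀ x, 0 ≤ f x)
    (hdens : Measure.map (X 0) P = volume.withDensity fun x => ENNReal.ofReal (f x))
    (ε : ℝ) (hε : 0 < ε) (hf : ContDiffOn ℝ 2 f (Metric.ball (0 : ℝ) ε))
    -- kernel: continuous, symmetric, supported in [−1,1], integrating to one
    (K : ℝ → ℝ) (hKcont : Continuous K) (hKnonneg : ∀ u, 0 ≤ K u)
    (hKsymm : ∀ u, K (-u) = K u)
    (hKsupp : ∀ u : ℝ, u ∉ Set.Icc (-1 : ℝ) 1 → K u = 0)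
    (hKone : (∫ u, K u) = 1)
    -- bandwidth
    (h : ℕ → ℝ) (hhpos : ∀ n, 0 < h n)
    (hh0 : Tendsto h atTop (nhds 0))
    (hnh : Tendsto (fun n : ℕ => (n : ℝ) * h n) atTop atTop) :
    -- (i) second-order expansion of the expected kernel-weighted design matrix
    (∀ a b : Fin 4,
      (fun n => (∫ ω, Kh K (h n) (X 0 ω) * Vvec (h n) (X 0 ω) a *
            Vvec (h n) (X 0 ω) b ∂P) -
          (f 0 * kappa K a b + h n * deriv f 0 * kmatM1 K a b +
            (h n) ^ 2 / 2 * deriv (deriv f) 0 * kmatM2 K a b)) =o[atTop]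
        (fun n => (h n) ^ 2)) ∧
    -- (ii) each entry of the centered empirical matrix has variance O(1/(nh)) ...
    (∀ a b : Fin 4,
      (fun n : ℕ => variance (fun ω => (1 / (n : ℝ)) * ∑ i ∈ Finset.range n,
          Kh K (h n) (X i ω) * Vvec (h n) (X i ω) a * Vvec (h n) (X i ω) b) P)
        =O[atTop] (fun n : ℕ => 1 / ((n : ℝ) * h n))) ∧
    -- ... and in particular the empirical matrix converges entrywise in probability
    (∀ a b : Fin 4, ∀ δ > (0 : ℝ),
      Tendsto (fun n : ℕ => (P {ω | δ < |(1 / (n : ℝ)) * (∑ i ∈ Finset.range n,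
          Kh K (h n) (X i ω) * Vvec (h n) (X i ω) a * Vvec (h n) (X i ω) b) -
          f 0 * kappa K a b|}).toReal) atTop (nhds 0)) := by
  have hcore := fun (s p : ℕ) => core_expansion P (X 0) (hXmeas 0) f hfmeas hfnonneg hdens
    ε hε hf K hKcont hKnonneg hKsupp hKone h hhpos hh0 s p
  have hEeq : ∀ (a b : Fin 4) (n : ℕ),
      (∫ ω, Kh K (h n) (X 0 ω) * Vvec (h n) (X 0 ω) a * Vvec (h n) (X 0 ω) b ∂P)
        = ∫ ω, indPos (X 0 ω) ^ (sIdx a + sIdx b) * (X 0 ω / h n) ^ (pIdx a + pIdx b)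
            * Kh K (h n) (X 0 ω) ∂P :=
    fun a b n => integral_congr_ae (ae_of_all _ fun ω => Vvec_mul K (h n) (X 0 ω) a b)
  have hI : ∀ a b : Fin 4,
      (fun n => (∫ ω, Kh K (h n) (X 0 ω) * Vvec (h n) (X 0 ω) a *
            Vvec (h n) (X 0 ω) b ∂P) -
          (f 0 * kappa K a b + h n * deriv f 0 * kmatM1 K a b +
            (h n) ^ 2 / 2 * deriv (deriv f) 0 * kmatM2 K a b)) =o[atTop]
        (fun n => (h n) ^ 2) := by
    intro a b
    have hfeq : (fun n => (∫ ω, Kh K (h n) (X 0 ω) * Vvec (h n) (X 0 ω) a *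
            Vvec (h n) (X 0 ω) b ∂P) -
          (f 0 * kappa K a b + h n * deriv f 0 * kmatM1 K a b +
            (h n) ^ 2 / 2 * deriv (deriv f) 0 * kmatM2 K a b))
        = (fun n => (∫ ω, indPos (X 0 ω) ^ (sIdx a + sIdx b)
              * (X 0 ω / h n) ^ (pIdx a + pIdx b) * Kh K (h n) (X 0 ω) ∂P) -
          (f 0 * mmom K (sIdx a + sIdx b) (pIdx a + pIdx b)
            + h n * deriv f 0 * mmom K (sIdx a + sIdx b) (pIdx a + pIdx b + 1) +
            (h n) ^ 2 / 2 * deriv (deriv f) 0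
              * mmom K (sIdx a + sIdx b) (pIdx a + pIdx b + 2))) := by
      funext n
      rw [hEeq a b n, kappa_eq K a b, kmatM1_eq K a b, kmatM2_eq K a b]
    rw [hfeq]
    exact hcore _ _
  -- mean convergence
  have h2t : Tendsto (fun n : ℕ => (h n) ^ 2) atTop (nhds 0) := by
    have := hh0.mul hh0
    simpa [pow_two] using this
  have hmean : ∀ s p : ℕ, Tendsto (fun n => ∫ ω, indPos (X 0 ω) ^ s * (X 0 ω / h n) ^ p
      * Kh K (h n) (X 0 ω) ∂P) atTop (nhds (f 0 * mmom K s p)) := by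
    intro s p
    have hd := (hcore s p).isBigO.trans_tendsto h2t
    have t1 : Tendsto (fun n : ℕ => h n * deriv f 0 * mmom K s (p + 1)) atTop (nhds 0) := by
      have := (hh0.mul_const (deriv f 0)).mul_const (mmom K s (p + 1))
      simpa using this
    have t2 : Tendsto (fun n : ℕ => (h n) ^ 2 / 2 * deriv (deriv f) 0 * mmom K s (p + 2))
        atTop (nhds 0) := by
      have := ((h2t.div_const 2).mul_const (deriv (deriv f) 0)).mul_const (mmom K s (p + 2))
      simpa using this
    have hsumT : Tendsto (fun n => f 0 * mmom K s p + h n * deriv f 0 * mmom K s (p + 1)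
        + (h n) ^ 2 / 2 * deriv (deriv f) 0 * mmom K s (p + 2)) atTop
        (nhds (f 0 * mmom K s p + 0 + 0)) :=
      (tendsto_const_nhds.add t1).add t2
    have hfin := hd.add hsumT
    have hfun : (fun n => ((∫ ω, indPos (X 0 ω) ^ s * (X 0 ω / h n) ^ p
        * Kh K (h n) (X 0 ω) ∂P) - (f 0 * mmom K s p + h n * deriv f 0 * mmom K s (p + 1)
        + (h n) ^ 2 / 2 * deriv (deriv f) 0 * mmom K s (p + 2)))
        + (f 0 * mmom K s p + h n * deriv f 0 * mmom K s (p + 1)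
        + (h n) ^ 2 / 2 * deriv (deriv f) 0 * mmom K s (p + 2)))
        = fun n => ∫ ω, indPos (X 0 ω) ^ s * (X 0 ω / h n) ^ p * Kh K (h n) (X 0 ω) ∂P := by
      funext n; ring
    rw [hfun] at hfin
    simpa using hfin
  have hconc := fun (s p : ℕ) =>
    concentration P X hXmeas hindep hident f hfmeas hfnonneg hdens ε hε hf K hKcont
      hKnonneg hKsupp h hhpos hh0 hnh s p (f 0 * mmom K s p) (hmean s p)
  refine ⟨hI, ?_, ?_⟩
  · intro a b
    have hveq : (fun n : ℕ => variance (fun ω => (1 / (n : ℝ)) * ∑ i ∈ Finset.range n,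
          Kh K (h n) (X i ω) * Vvec (h n) (X i ω) a * Vvec (h n) (X i ω) b) P)
        = fun n : ℕ => variance (fun ω => (1 / (n : ℝ)) * ∑ i ∈ Finset.range n,
          indPos (X i ω) ^ (sIdx a + sIdx b) * (X i ω / h n) ^ (pIdx a + pIdx b)
            * Kh K (h n) (X i ω)) P := by
      funext n
      congr 1
      funext ω
      congr 1
      exact Finset.sum_congr rfl fun i _ => Vvec_mul K (h n) (X i ω) a b
    rw [hveq]
    exact (hconc (sIdx a + sIdx b) (pIdx a + pIdx b)).1
  · intro a b δ hδ
    have hseq : (fun n : ℕ => (P {ω | δ < |(1 / (n : ℝ)) * (∑ i ∈ Finset.range n,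
          Kh K (h n) (X i ω) * Vvec (h n) (X i ω) a * Vvec (h n) (X i ω) b) -
          f 0 * kappa K a b|}).toReal)
        = fun n : ℕ => (P {ω | δ < |(1 / (n : ℝ)) * (∑ i ∈ Finset.range n,
          indPos (X i ω) ^ (sIdx a + sIdx b) * (X i ω / h n) ^ (pIdx a + pIdx b)
            * Kh K (h n) (X i ω)) -
          f 0 * mmom K (sIdx a + sIdx b) (pIdx a + pIdx b)|}).toReal := by
      funext n
      congr 2
      apply Set.ext
      intro ω
      rw [Set.mem_setOf_eq, Set.mem_setOf_eq,
        Finset.sum_congr rfl fun i _ => Vvec_mul K (h n) (X i ω) a b, kappa_eq K a b]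
    rw [hseq]
    exact (hconc (sIdx a + sIdx b) (pIdx a + pIdx b)).2 δ hδ


end
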